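/- Let S be a finite sequence of points in a d-dimensional real affine space (or ℝ^d) with |S| > (d+1)(r-1). Then there exist r pairwise disjoint subsequences S_1, …, S_r of S such that ∅ ≠ aff(S_1) ⊆ aff(S_2) ⊆ … ⊆ aff(S_r); in particular ⋂_{i=1}^r aff(S_i) ≠ ∅. -/

import Mathlib

open Classical in
/-- From any finset of indices one can extract a small subset whose points have the same
affine span. -/
lemma affine_tverberg_extract {ι : Type*} [Fintype ι] [DecidableEq ι]
    (d : ℕ) (S : ι → (Fin d → ℝ)) (A : Finset ι) :
    ∃ B : Finset ι, B ⊆ A ∧ B.card ≤ d + 1 ∧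
      affineSpan ℝ (S '' (B : Set ι)) = affineSpan ℝ (S '' (A : Set ι)) ∧
      (A.Nonempty → B.Nonempty) := by
  obtain ⟨t, hts, hspan, hind⟩ := exists_affineIndependent ℝ (Fin d → ℝ) (S '' (A : Set ι))
  have htfin : t.Finite := (A.finite_toSet.image S).subset hts
  haveI : Fintype t := htfin.fintype
  have hcard : t.ncard ≤ d + 1 := by
    have h1 := hind.card_le_finrank_succ
    rw [← Nat.card_eq_fintype_card, Nat.card_coe_set_eq] at h1
    have h2 : Module.finrank ℝ (vectorSpan ℝ (Set.range ((↑) : t → (Fin d → ℝ)))) ≤ d := by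
      simpa using Submodule.finrank_le (vectorSpan ℝ (Set.range ((↑) : t → (Fin d → ℝ))))
    omega
  -- choose an index for each point of t
  have hchoice : ∀ p ∈ t, ∃ i ∈ A, S i = p := by
    intro p hp
    obtain ⟨i, hi, rfl⟩ := hts hp
    exact ⟨i, hi, rfl⟩
  choose f hf1 hf2 using hchoice
  let B : Finset ι := htfin.toFinset.attach.image
    (fun p => f p.1 (by simpa using p.2))
  refine ⟨B, ?_, ?_, ?_, ?_⟩
  · intro i hi
    simp only [B, Finset.mem_image] at hi
    obtain ⟨p, _, rfl⟩ := hi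
    exact hf1 _ _
  · calc B.card ≤ htfin.toFinset.attach.card := Finset.card_image_le
      _ = htfin.toFinset.card := Finset.card_attach
      _ = t.ncard := (Set.ncard_eq_toFinset_card t htfin).symm
      _ ≤ d + 1 := hcard
  · have himg : S '' (B : Set ι) = t := by
      ext x
      constructor
      · rintro ⟨i, hi, rfl⟩
        simp only [B, Finset.coe_image, Set.mem_image] at hi
        obtain ⟨p, _, rfl⟩ := hi
        rw [hf2]
        simpa using p.2
      · intro hx
        refine ⟨f x hx, ?_, hf2 x hx⟩
        simp only [B, Finset.coe_image, Set.mem_image]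
        exact ⟨⟨x, by simpa using hx⟩, by simp, rfl⟩
    rw [himg, hspan]
  · intro hA
    have ht : t.Nonempty := by
      by_contra h
      rw [Set.not_nonempty_iff_eq_empty] at h
      have h2 : (S '' (A : Set ι)).Nonempty :=
        (Finset.coe_nonempty.2 hA).image S
      have h3 : ((affineSpan ℝ (S '' (A : Set ι)) : AffineSubspace ℝ (Fin d → ℝ)) :
          Set (Fin d → ℝ)).Nonempty := (affineSpan_nonempty ℝ).2 h2
      rw [← hspan, h] at h3
      simpa using h3
    obtain ⟨p, hp⟩ := ht
    exact ⟨f p hp, Finset.mem_image.2 ⟨⟨p, by simpa using hp⟩, by simp, rfl⟩⟩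

lemma affine_tverberg_aux {ι : Type*} [Fintype ι] [DecidableEq ι]
    (d : ℕ) (S : ι → (Fin d → ℝ)) :
    ∀ n (A : Finset ι), (d + 1) * n < A.card →
    ∃ J : Fin (n + 1) → Finset ι,
      (∀ i, J i ⊆ A) ∧
      (∀ i j, i ≠ j → Disjoint (J i) (J j)) ∧
      (J 0).Nonempty ∧
      (∀ i j, i ≤ j → affineSpan ℝ (S '' (J i : Set ι)) ≤ affineSpan ℝ (S '' (J j : Set ι))) ∧
      affineSpan ℝ (S '' (J (Fin.last n) : Set ι)) = affineSpan ℝ (S '' (A : Set ι)) := by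
  intro n
  induction n with
  | zero =>
    intro A hA
    obtain ⟨B, hBA, _, hBspan, hBne⟩ := affine_tverberg_extract d S A
    refine ⟨fun _ => B, fun _ => hBA,
      fun i j hij => absurd (by omega : i = j) hij,
      hBne (Finset.card_pos.1 (by omega)), fun _ _ _ => le_rfl, hBspan⟩
  | succ n ih =>
    intro A hA
    obtain ⟨B, hBA, hBcard, hBspan, hBne⟩ := affine_tverberg_extract d S A
    set A' := A \ B with hA'
    have hA'card : (d + 1) * n < A'.card := by
      have h1 : A'.card = A.card - B.card := Finset.card_sdiff_of_subset hBA
      have h2 : (d + 1) * (n + 1) = (d + 1) * n + (d + 1) := by ring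
      have h3 : B.card ≤ A.card := Finset.card_le_card hBA
      omega
    obtain ⟨J', hJ'sub, hJ'disj, hJ'ne, hJ'mono, hJ'span⟩ := ih A' hA'card
    have hsubA' : ∀ i, J' i ⊆ A := fun i => (hJ'sub i).trans Finset.sdiff_subset
    have hdisjBA' : ∀ k, Disjoint (J' k) B := fun k =>
      Finset.disjoint_left.2 fun x hx hxB =>
        (Finset.mem_sdiff.1 (hJ'sub k hx)).2 hxB
    have hsub : ∀ i, (Fin.snoc J' B : Fin (n + 2) → Finset ι) i ⊆ A := by
      intro i
      rcases Fin.eq_castSucc_or_eq_last i with ⟨i', rfl⟩ | rfl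
      · rw [Fin.snoc_castSucc]; exact hsubA' i'
      · rw [Fin.snoc_last]; exact hBA
    have hle_all : ∀ k : Fin (n + 2),
        affineSpan ℝ (S '' ((Fin.snoc J' B : Fin (n + 2) → Finset ι) k : Set ι)) ≤
          affineSpan ℝ (S '' (A : Set ι)) := fun k =>
      affineSpan_mono ℝ (Set.image_mono (f := S) (by exact_mod_cast hsub k))
    refine ⟨Fin.snoc J' B, hsub, ?_, ?_, ?_, ?_⟩
    · intro i j hij
      rcases Fin.eq_castSucc_or_eq_last i with ⟨i', rfl⟩ | rfl <;>
        rcases Fin.eq_castSucc_or_eq_last j with ⟨j', rfl⟩ | rfl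
      · rw [Fin.snoc_castSucc, Fin.snoc_castSucc]
        exact hJ'disj i' j' fun h => hij (by rw [h])
      · rw [Fin.snoc_castSucc, Fin.snoc_last]
        exact hdisjBA' i'
      · rw [Fin.snoc_last, Fin.snoc_castSucc]
        exact (hdisjBA' j').symm
      · exact absurd rfl hij
    · have h0 : (Fin.snoc J' B : Fin (n + 2) → Finset ι) 0 = J' 0 := by
        have h : (0 : Fin (n + 2)) = Fin.castSucc 0 := rfl
        rw [h, Fin.snoc_castSucc]
      rw [h0]; exact hJ'ne
    · intro i j hij
      rcases Fin.eq_castSucc_or_eq_last j with ⟨j', rfl⟩ | rfl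
      · rcases Fin.eq_castSucc_or_eq_last i with ⟨i', rfl⟩ | rfl
        · rw [Fin.snoc_castSucc, Fin.snoc_castSucc]
          exact hJ'mono i' j' (Fin.castSucc_le_castSucc_iff.1 hij)
        · exact absurd hij (not_le.2 (Fin.castSucc_lt_last j'))
      · rw [Fin.snoc_last, hBspan]
        exact hle_all i
    · rw [Fin.snoc_last, hBspan]

theorem affine_tverberg {ι : Type*} [Fintype ι] [DecidableEq ι]
    (d r : ℕ) (hr : 1 ≤ r) (S : ι → (Fin d → ℝ))
    (hlen : Fintype.card ι > (d + 1) * (r - 1)) :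
    ∃ J : Fin r → Finset ι,
      (∀ i j, i ≠ j → Disjoint (J i) (J j)) ∧
      ((affineSpan ℝ (S '' (J ⟨0, hr⟩ : Set ι)) : Set (Fin d → ℝ)).Nonempty) ∧
      (∀ i j : Fin r, i ≤ j →
        affineSpan ℝ (S '' (J i : Set ι)) ≤ affineSpan ℝ (S '' (J j : Set ι))) := by
  obtain ⟨n, rfl⟩ : ∃ n, r = n + 1 := ⟨r - 1, by omega⟩
  have hcard : (d + 1) * n < (Finset.univ : Finset ι).card := by
    simpa using hlen
  obtain ⟨J, _, hdisj, hne, hmono, _⟩ := affine_tverberg_aux d S n Finset.univ hcard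
  refine ⟨J, hdisj, ?_, hmono⟩
  have h0 : (⟨0, hr⟩ : Fin (n + 1)) = 0 := rfl
  rw [h0]
  exact (affineSpan_nonempty ℝ).2 ((Finset.coe_nonempty.2 hne).image S)
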